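/- Let n ≥ 1 and 1 ≤ j ≤ n be integers, let S ⊆ {1, …, n} with |S| = s ≥ 1, let r be an integer with 1 ≤ r ≤ s, and write λ = s/r. If λ ≥ n/j, then (1/C(n,j)) · Σ_{A ⊆ {1,…,n}, |A| = j} min(|A ∩ S|, r) ≥ (1 − 1/e) · r. If instead λ ≤ n/j, then (1/C(n,j)) · Σ_{A ⊆ {1,…,n}, |A| = j} min(|A ∩ S|, r) ≥ (1 − 1/e) · s · j / n. -/

import Mathlib

open Finset


lemma aux_double (n : ℕ) (F : Finset (Fin n) → ℝ) (t : ℕ) :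
    ∑ A ∈ (univ : Finset (Fin n)).powersetCard (t+1), ∑ x ∈ A, F A
      = ∑ B ∈ (univ : Finset (Fin n)).powersetCard t, ∑ x ∈ univ \ B, F (insert x B) := by
  rw [Finset.sum_sigma', Finset.sum_sigma']
  refine Finset.sum_nbij' (fun p => ⟨p.1.erase p.2, p.2⟩) (fun p => ⟨insert p.2 p.1, p.2⟩)
    ?_ ?_ ?_ ?_ ?_
  · rintro ⟨A, x⟩ hp
    simp only [mem_sigma, mem_powersetCard] at hp ⊢
    obtain ⟨⟨_, hcard⟩, hx⟩ := hp
    refine ⟨⟨subset_univ _, ?_⟩, ?_⟩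
    · rw [card_erase_of_mem hx, hcard]; rfl
    · simp [Finset.notMem_erase]
  · rintro ⟨B, x⟩ hp
    simp only [mem_sigma, mem_powersetCard, mem_sdiff] at hp ⊢
    obtain ⟨⟨_, hcard⟩, _, hx⟩ := hp
    exact ⟨⟨subset_univ _, by rw [card_insert_of_notMem hx, hcard]⟩, mem_insert_self _ _⟩
  · rintro ⟨A, x⟩ hp
    simp only [mem_sigma, mem_powersetCard] at hp
    simp [Finset.insert_erase hp.2]
  · rintro ⟨B, x⟩ hp
    simp only [mem_sigma, mem_powersetCard, mem_sdiff] at hp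
    simp [Finset.erase_insert hp.2.2]
  · rintro ⟨A, x⟩ hp
    simp only [mem_sigma, mem_powersetCard] at hp
    simp [Finset.insert_erase hp.2]


lemma aux_insert (n r : ℕ) (S B : Finset (Fin n)) (x : Fin n) (hx : x ∉ B) :
    (min ((insert x B) ∩ S).card r : ℝ)
      = (min (B ∩ S).card r : ℝ) + (if x ∈ S ∧ (B ∩ S).card < r then 1 else 0) := by
  by_cases hxS : x ∈ S
  · rw [Finset.insert_inter_of_mem hxS, Finset.card_insert_of_notMem (by simp [hx])]
    by_cases hc : (B ∩ S).card < r
    · simp only [hxS, hc, and_self, if_true]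
      rw [min_eq_left (by exact_mod_cast hc), min_eq_left (by exact_mod_cast hc.le)]
      push_cast; ring
    · simp only [hxS, hc, and_false, if_false]
      rw [min_eq_right (by exact_mod_cast Nat.le_succ_of_le (Nat.le_of_not_lt hc)),
        min_eq_right (by exact_mod_cast Nat.le_of_not_lt hc), add_zero]
  · rw [Finset.insert_inter_of_notMem hxS]
    simp [hxS]

lemma aux_rowsum (n s r t : ℕ) (S B : Finset (Fin n)) (hS : S.card = s)
    (hB : B.card = t) :
    ∑ x ∈ univ \ B, (min ((insert x B) ∩ S).card r : ℝ)
      = ((n : ℝ) - t) * (min (B ∩ S).card r : ℝ)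
        + (if (B ∩ S).card < r then (s : ℝ) - (B ∩ S).card else 0) := by
  have hBn : t ≤ n := by simpa [hB] using card_le_univ B
  have hcb : (univ \ B).card = n - t := by
    rw [card_sdiff_of_subset (subset_univ _), card_univ, Fintype.card_fin, hB]
  calc ∑ x ∈ univ \ B, (min ((insert x B) ∩ S).card r : ℝ)
      = ∑ x ∈ univ \ B, ((min (B ∩ S).card r : ℝ)
          + (if x ∈ S ∧ (B ∩ S).card < r then 1 else 0)) := by
        refine Finset.sum_congr rfl fun x hxm => ?_
        exact aux_insert n r S B x (by simpa using (mem_sdiff.mp hxm).2)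
    _ = ((n : ℝ) - t) * (min (B ∩ S).card r : ℝ)
        + ∑ x ∈ univ \ B, (if x ∈ S ∧ (B ∩ S).card < r then (1:ℝ) else 0) := by
        rw [Finset.sum_add_distrib, Finset.sum_const, hcb, nsmul_eq_mul,
          Nat.cast_sub hBn]
    _ = _ := by
        congr 1
        by_cases hc : (B ∩ S).card < r
        · simp only [hc, and_true, if_true]
          rw [Finset.sum_boole]
          have h0 : Finset.filter (· ∈ S) (univ \ B) = S \ B := by
            ext y; simp [mem_sdiff, and_comm]
          have h1 : S \ B = S \ (B ∩ S) := by ext y; simp only [mem_sdiff, mem_inter]; tauto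
          have h2 : (B ∩ S).card ≤ s := by
            rw [← hS]; exact card_le_card inter_subset_right
          rw [h0, h1, card_sdiff_of_subset (by intro y hy; exact (mem_inter.mp hy).2)]
          rw [hS, Nat.cast_sub h2]
        · simp [hc]


noncomputable def Gs (n r : ℕ) (S : Finset (Fin n)) (t : ℕ) : ℝ :=
  ∑ A ∈ (univ : Finset (Fin n)).powersetCard t, (min (A ∩ S).card r : ℝ)

lemma Gs_nonneg (n r : ℕ) (S : Finset (Fin n)) (t : ℕ) : 0 ≤ Gs n r S t :=
  Finset.sum_nonneg fun A _ => le_min (by positivity) (by positivity)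

lemma Gs_le (n r : ℕ) (S : Finset (Fin n)) (t : ℕ) :
    Gs n r S t ≤ (r : ℝ) * (n.choose t) := by
  calc Gs n r S t ≤ ∑ _A ∈ (univ : Finset (Fin n)).powersetCard t, (r:ℝ) :=
        Finset.sum_le_sum fun A _ => min_le_right _ _
    _ = (r : ℝ) * (n.choose t) := by
        rw [Finset.sum_const, Finset.card_powersetCard, card_univ, Fintype.card_fin,
          nsmul_eq_mul, mul_comm]


lemma Gs_rec (n s r : ℕ) (S : Finset (Fin n)) (hS : S.card = s) (hrs : r ≤ s)
    (hr1 : 1 ≤ r) (t : ℕ) :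
    ((n:ℝ) - t) * (r:ℝ) * Gs n r S t + (s:ℝ) * ((r:ℝ) * (n.choose t) - Gs n r S t)
      ≤ ((t:ℝ) + 1) * (r:ℝ) * Gs n r S (t+1) := by
  have hC : ((univ : Finset (Fin n)).powersetCard t).card = n.choose t := by
    rw [Finset.card_powersetCard, card_univ, Fintype.card_fin]
  calc ((n:ℝ) - t) * (r:ℝ) * Gs n r S t + (s:ℝ) * ((r:ℝ) * (n.choose t) - Gs n r S t)
      = ∑ B ∈ (univ : Finset (Fin n)).powersetCard t,
          (((n:ℝ) - t) * (r:ℝ) * (min (B ∩ S).card r : ℝ)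
            + (s:ℝ) * ((r:ℝ) - (min (B ∩ S).card r : ℝ))) := by
        rw [Finset.sum_add_distrib, ← Finset.mul_sum, ← Finset.mul_sum,
          Finset.sum_sub_distrib, Finset.sum_const, hC, nsmul_eq_mul, mul_comm ((n.choose t : ℝ))]
        rfl
    _ ≤ ∑ B ∈ (univ : Finset (Fin n)).powersetCard t,
          (r:ℝ) * (((n : ℝ) - t) * (min (B ∩ S).card r : ℝ)
            + (if (B ∩ S).card < r then (s : ℝ) - (B ∩ S).card else 0)) := by
        refine Finset.sum_le_sum fun B hB => ?_
        have hcs : (B ∩ S).card ≤ s := hS ▸ card_le_card inter_subset_right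
        by_cases hc : (B ∩ S).card < r
        · rw [if_pos hc, min_eq_left (by exact_mod_cast hc.le)]
          have h1 : (0:ℝ) ≤ ((B ∩ S).card : ℝ) := by positivity
          have h2 : (r:ℝ) ≤ s := by exact_mod_cast hrs
          have h3 : ((B ∩ S).card : ℝ) ≤ s := by exact_mod_cast hcs
          nlinarith
        · rw [if_neg hc, min_eq_right (by exact_mod_cast Nat.le_of_not_lt hc)]
          nlinarith [min_le_right ((B ∩ S).card : ℝ) (r:ℝ)]
    _ = (r:ℝ) * ∑ B ∈ (univ : Finset (Fin n)).powersetCard t,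
          ∑ x ∈ univ \ B, (min ((insert x B) ∩ S).card r : ℝ) := by
        rw [Finset.mul_sum]
        refine Finset.sum_congr rfl fun B hB => ?_
        rw [aux_rowsum n s r t S B hS (Finset.mem_powersetCard.mp hB).2]
    _ = (r:ℝ) * ∑ A ∈ (univ : Finset (Fin n)).powersetCard (t+1),
          ∑ _x ∈ A, (min (A ∩ S).card r : ℝ) := by
        rw [aux_double n (fun A => (min (A ∩ S).card r : ℝ)) t]
    _ = ((t:ℝ) + 1) * (r:ℝ) * Gs n r S (t+1) := by
        rw [Gs, Finset.mul_sum, Finset.mul_sum]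
        refine Finset.sum_congr rfl fun A hA => ?_
        rw [Finset.sum_const, (Finset.mem_powersetCard.mp hA).2, nsmul_eq_mul]
        push_cast; ring

lemma Gs_deficit (n s r : ℕ) (S : Finset (Fin n)) (hS : S.card = s) (hrs : r ≤ s)
    (hr1 : 1 ≤ r) (hsn : s ≤ n) (hs : 1 ≤ s) :
    ∀ t, t ≤ n →
      (r:ℝ) - Gs n r S t / (n.choose t) ≤ (r:ℝ) * (1 - (s:ℝ)/((r:ℝ)*n))^t := by
  have hn : 1 ≤ n := le_trans hs hsn
  have hn0 : (0:ℝ) < n := by exact_mod_cast hn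
  have hr0 : (0:ℝ) < r := by exact_mod_cast hr1
  have hs0 : (0:ℝ) ≤ s := by positivity
  have hq0 : (0:ℝ) ≤ 1 - (s:ℝ)/((r:ℝ)*n) := by
    have hsrn : (s:ℝ) ≤ (r:ℝ)*n := by
      calc (s:ℝ) ≤ (n:ℝ) := by exact_mod_cast hsn
        _ ≤ (r:ℝ)*n := by
          have hrr : (1:ℝ) ≤ r := by exact_mod_cast hr1
          nlinarith [mul_nonneg (sub_nonneg.mpr hrr) hn0.le]
    have : (s:ℝ)/((r:ℝ)*n) ≤ 1 := by
      rw [div_le_one (by positivity)]; exact hsrn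
    linarith
  intro t
  induction t with
  | zero =>
    intro _
    have hG0 : Gs n r S 0 = 0 := by
      simp [Gs, Finset.powersetCard_zero]
    simp [hG0]
  | succ t ih =>
    intro hle
    have htn : t < n := hle
    have ihs := ih (le_of_lt htn)
    set c : ℝ := (n.choose t : ℝ) with hc_def
    set d : ℝ := (n.choose (t+1) : ℝ) with hd_def
    have hc : (0:ℝ) < c := by
      rw [hc_def]; exact_mod_cast Nat.choose_pos (le_of_lt htn)
    have hd : (0:ℝ) < d := by
      rw [hd_def]; exact_mod_cast Nat.choose_pos hle
    set a : ℝ := Gs n r S t / c with ha_def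
    set b : ℝ := Gs n r S (t+1) / d with hb_def
    have ha : a * c = Gs n r S t := div_mul_cancel₀ _ (ne_of_gt hc)
    have hb : b * d = Gs n r S (t+1) := div_mul_cancel₀ _ (ne_of_gt hd)
    have hrel : ((t:ℝ)+1) * d = ((n:ℝ) - t) * c := by
      have := Nat.choose_succ_right_eq n t
      have h2 : ((n.choose (t+1) : ℝ)) * ((t:ℝ)+1) = (n.choose t : ℝ) * ((n:ℝ) - t) := by
        rw [show ((n:ℝ) - t) = ((n - t : ℕ) : ℝ) by
          rw [Nat.cast_sub (le_of_lt htn)]]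
        exact_mod_cast congrArg (Nat.cast (R := ℝ)) this
      linarith [h2]
    have ra : 0 ≤ (r:ℝ) - a := by
      have := Gs_le n r S t
      rw [← ha] at this
      nlinarith
    have rb : 0 ≤ (r:ℝ) - b := by
      have := Gs_le n r S (t+1)
      rw [← hb] at this
      nlinarith
    have hrec := Gs_rec n s r S hS hrs hr1 t
    rw [← ha, ← hb, ← hc_def] at hrec
    have key2 : ((n:ℝ) - t) * r * a + (s:ℝ) * ((r:ℝ) - a) ≤ ((n:ℝ) - t) * r * b := by
      have e1 : ((n:ℝ) - t) * (r:ℝ) * (a * c) + (s:ℝ) * ((r:ℝ) * c - a * c)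
          = (((n:ℝ) - t) * r * a + (s:ℝ) * ((r:ℝ) - a)) * c := by ring
      have e2 : ((t:ℝ) + 1) * (r:ℝ) * (b * d) = (((n:ℝ) - t) * r * b) * c := by
        linear_combination ((r:ℝ) * b) * hrel
      rw [e1, e2] at hrec
      exact le_of_mul_le_mul_right hrec hc
    have hstep : (r:ℝ) - b ≤ (1 - (s:ℝ)/((r:ℝ)*n)) * ((r:ℝ) - a) := by
      rw [show (1 - (s:ℝ)/((r:ℝ)*n)) = ((r:ℝ)*n - s)/((r:ℝ)*n) by field_simp]
      rw [div_mul_eq_mul_div, le_div_iff₀ (by positivity)]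
      have ht0 : (0:ℝ) ≤ t := by positivity
      have htn' : (0:ℝ) < (n:ℝ) - t := by
        have : (t:ℝ) < n := by exact_mod_cast htn
        linarith
      have hK : 0 ≤ (n:ℝ) * (((n:ℝ) - t) * r * b
          - (((n:ℝ) - t) * r * a + (s:ℝ) * ((r:ℝ) - a))) :=
        mul_nonneg hn0.le (sub_nonneg.mpr key2)
      have hT : 0 ≤ ((r:ℝ) - a) * (t:ℝ) * (s:ℝ) :=
        mul_nonneg (mul_nonneg ra ht0) hs0
      have h5 : ((n:ℝ) - t) * (((r:ℝ)*n - s) * ((r:ℝ) - a) - ((r:ℝ) - b) * ((r:ℝ)*n))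
          = (n:ℝ) * (((n:ℝ) - t) * r * b
            - (((n:ℝ) - t) * r * a + (s:ℝ) * ((r:ℝ) - a)))
            + ((r:ℝ) - a) * (t:ℝ) * (s:ℝ) := by ring
      have h6 : 0 ≤ ((n:ℝ) - t) * (((r:ℝ)*n - s) * ((r:ℝ) - a) - ((r:ℝ) - b) * ((r:ℝ)*n)) := by
        rw [h5]; linarith
      have h7 : 0 ≤ ((r:ℝ)*n - s) * ((r:ℝ) - a) - ((r:ℝ) - b) * ((r:ℝ)*n) :=
        (mul_nonneg_iff_of_pos_left htn').mp h6
      linarith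
    calc (r:ℝ) - b ≤ (1 - (s:ℝ)/((r:ℝ)*n)) * ((r:ℝ) - a) := hstep
      _ ≤ (1 - (s:ℝ)/((r:ℝ)*n)) * ((r:ℝ) * (1 - (s:ℝ)/((r:ℝ)*n))^t) :=
          mul_le_mul_of_nonneg_left ihs hq0
      _ = (r:ℝ) * (1 - (s:ℝ)/((r:ℝ)*n))^(t+1) := by ring


/-- For `S ⊆ {1,…,n}` with `|S| = s ≥ 1`, `1 ≤ r ≤ s` and `λ = s/r`: if `λ ≥ n/j` then
the average of `min(|A ∩ S|, r)` over all `j`-element subsets `A` of `{1,…,n}` is at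
least `(1 − 1/e)·r`; if `λ ≤ n/j` it is at least `(1 − 1/e)·s·j/n`. -/
theorem stmt7 (n j s r : ℕ) (hn : 1 ≤ n) (hj1 : 1 ≤ j) (hjn : j ≤ n)
    (S : Finset (Fin n)) (hS : S.card = s) (hs : 1 ≤ s) (hr1 : 1 ≤ r) (hrs : r ≤ s) :
    (((n : ℝ) / (j : ℝ) ≤ (s : ℝ) / (r : ℝ) →
      (1 - (Real.exp 1)⁻¹) * (r : ℝ) ≤
        (1 / (n.choose j : ℝ)) *
          ∑ A ∈ (Finset.univ : Finset (Fin n)).powersetCard j,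
            (min (A ∩ S).card r : ℝ))) ∧
    (((s : ℝ) / (r : ℝ) ≤ (n : ℝ) / (j : ℝ) →
      (1 - (Real.exp 1)⁻¹) * (s : ℝ) * (j : ℝ) / (n : ℝ) ≤
        (1 / (n.choose j : ℝ)) *
          ∑ A ∈ (Finset.univ : Finset (Fin n)).powersetCard j,
            (min (A ∩ S).card r : ℝ))) := by
  have hsn : s ≤ n := by
    have h := Finset.card_le_univ S
    rwa [hS, Fintype.card_fin] at h
  have hn0 : (0:ℝ) < n := by exact_mod_cast hn
  have hr0 : (0:ℝ) < r := by exact_mod_cast hr1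
  have hj0 : (0:ℝ) < j := by exact_mod_cast hj1
  have hs0 : (0:ℝ) < s := by exact_mod_cast hs
  have hgoal : (1 / (n.choose j : ℝ)) *
      ∑ A ∈ (Finset.univ : Finset (Fin n)).powersetCard j,
        (min (A ∩ S).card r : ℝ) = Gs n r S j / (n.choose j) := by
    rw [Gs, one_div_mul_eq_div]
  set x : ℝ := (s:ℝ) * j / ((r:ℝ) * n) with hx_def
  have hx0 : 0 ≤ x := by positivity
  -- deficit bound
  have hdef := Gs_deficit n s r S hS hrs hr1 hsn hs j hjn
  have hq1 : (1 - (s:ℝ)/((r:ℝ)*n)) ≤ Real.exp (-((s:ℝ)/((r:ℝ)*n))) := by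
    have := Real.add_one_le_exp (-((s:ℝ)/((r:ℝ)*n)))
    linarith
  have hq0 : (0:ℝ) ≤ 1 - (s:ℝ)/((r:ℝ)*n) := by
    have hsrn : (s:ℝ) ≤ (r:ℝ)*n := by
      have h1 : (s:ℝ) ≤ n := by exact_mod_cast hsn
      have hrr : (1:ℝ) ≤ r := by exact_mod_cast hr1
      nlinarith [mul_nonneg (sub_nonneg.mpr hrr) hn0.le]
    have : (s:ℝ)/((r:ℝ)*n) ≤ 1 := by
      rw [div_le_one (by positivity)]; exact hsrn
    linarith
  have hpow : (1 - (s:ℝ)/((r:ℝ)*n))^j ≤ Real.exp (-x) := by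
    calc (1 - (s:ℝ)/((r:ℝ)*n))^j ≤ (Real.exp (-((s:ℝ)/((r:ℝ)*n))))^j :=
          pow_le_pow_left₀ hq0 hq1 j
      _ = Real.exp ((j:ℕ) * (-((s:ℝ)/((r:ℝ)*n)))) := (Real.exp_nat_mul _ j).symm
      _ = Real.exp (-x) := by
          rw [hx_def]; congr 1; field_simp
  have hmain : (r:ℝ) * (1 - Real.exp (-x)) ≤ Gs n r S j / (n.choose j) := by
    have h1 : (r:ℝ) - Gs n r S j / (n.choose j) ≤ (r:ℝ) * Real.exp (-x) := by
      calc (r:ℝ) - Gs n r S j / (n.choose j) ≤ (r:ℝ) * (1 - (s:ℝ)/((r:ℝ)*n))^j := hdef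
        _ ≤ (r:ℝ) * Real.exp (-x) := mul_le_mul_of_nonneg_left hpow hr0.le
    linarith
  constructor
  · intro hcase
    rw [hgoal]
    have hx1 : (1:ℝ) ≤ x := by
      rw [div_le_div_iff₀ hj0 hr0] at hcase
      rw [hx_def, le_div_iff₀ (by positivity)]
      nlinarith
    have : Real.exp (-x) ≤ (Real.exp 1)⁻¹ := by
      rw [← Real.exp_neg]
      exact Real.exp_le_exp.mpr (by linarith)
    calc (1 - (Real.exp 1)⁻¹) * r ≤ (1 - Real.exp (-x)) * r := by nlinarith
      _ = (r:ℝ) * (1 - Real.exp (-x)) := by ring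
      _ ≤ _ := hmain
  · intro hcase
    rw [hgoal]
    have hx1 : x ≤ 1 := by
      rw [div_le_div_iff₀ hr0 hj0] at hcase
      rw [hx_def, div_le_one (by positivity)]
      nlinarith
    -- convexity: exp(-x) ≤ x * exp(-1) + (1-x)
    have hconv : Real.exp (-x) ≤ x * Real.exp (-1) + (1 - x) := by
      have := convexOn_exp.2 (Set.mem_univ (-1:ℝ)) (Set.mem_univ (0:ℝ))
        hx0 (by linarith : (0:ℝ) ≤ 1 - x) (by ring)
      simpa [smul_eq_mul, mul_comm] using this
    have hrx : (r:ℝ) * x = (s:ℝ) * j / n := by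
      rw [hx_def]; field_simp
    have h2 : (1 - (Real.exp 1)⁻¹) * x ≤ 1 - Real.exp (-x) := by
      rw [← Real.exp_neg] at *
      nlinarith [Real.exp_pos (-1:ℝ)]
    calc (1 - (Real.exp 1)⁻¹) * s * j / n
        = (1 - (Real.exp 1)⁻¹) * ((s:ℝ) * j / n) := by ring
      _ = (1 - (Real.exp 1)⁻¹) * ((r:ℝ) * x) := by rw [hrx]
      _ = (r:ℝ) * ((1 - (Real.exp 1)⁻¹) * x) := by ring
      _ ≤ (r:ℝ) * (1 - Real.exp (-x)) := mul_le_mul_of_nonneg_left h2 hr0.le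
      _ ≤ _ := hmain
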